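/- Let (A,B) be a Pythagorean pair on 𝔥 and suppose ξ ∈ 𝔥 is a nonzero vector which is partially contained in each of finitely many pairwise distinct rays p^{(1)},…,p^{(m)} (m ≥ 1), with φ(w)ξ = 0 for every word w not a prefix-operator of one of these rays, and φ(v)ξ orthogonal to 𝔙 for all words v. Then a contradiction follows; i.e. for some i and some n, the vector p^{(i)}_n ξ is contained in the truncated ray _n p^{(i)}. -/

import Mathlib

open Filter Topology

noncomputable def pythWord {H : Type*} [NormedAddCommGroup H] [InnerProductSpace ℂ H]
    (A B : H →L[ℂ] H) (w : List Bool) : H →L[ℂ] H :=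
  (w.map (fun x => if x then B else A)).prod

/-- The operator `p_n` given by composing the operators of the first `n` letters of the
ray `p` (first letter applied first). `false` stands for `a ↦ A`, `true` for `b ↦ B`. -/
noncomputable def rayOp {H : Type*} [NormedAddCommGroup H] [InnerProductSpace ℂ H]
    (A B : H →L[ℂ] H) (p : ℕ → Bool) (n : ℕ) : H →L[ℂ] H :=
  pythWord A B ((List.range n).reverse.map p)

/-- The set  of vectors quasi-contained in finitely many rays. -/
def vSpace {H : Type*} [NormedAddCommGroup H] [InnerProductSpace ℂ H]
    (A B : H →L[ℂ] H) : Set H :=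
  {η | ∃ (m N : ℕ) (ps : Fin m → ℕ → Bool), 1 ≤ m ∧
    ∀ n, N ≤ n → ‖η‖ ^ 2 = ∑ k, ‖rayOp A B (ps k) n η‖ ^ 2}

section Aux

variable {H : Type*} [NormedAddCommGroup H] [InnerProductSpace ℂ H] [CompleteSpace H]
  (A B : H →L[ℂ] H)

lemma rayOp_zero (w : ℕ → Bool) : rayOp A B w 0 = 1 := by
  simp [rayOp, pythWord]

lemma rayOp_succ (w : ℕ → Bool) (n : ℕ) :
    rayOp A B w (n + 1) = (if w n then B else A) * rayOp A B w n := by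
  simp [rayOp, pythWord, List.range_succ]

lemma rayOp_congr (w w' : ℕ → Bool) (n : ℕ) (h : ∀ k < n, w k = w' k) :
    rayOp A B w n = rayOp A B w' n := by
  unfold rayOp
  congr 1
  refine List.map_congr_left fun a ha => ?_
  rw [List.mem_reverse, List.mem_range] at ha
  exact h a ha

lemma pyth_norm (hpyth : (ContinuousLinearMap.adjoint A).comp A
      + (ContinuousLinearMap.adjoint B).comp B = 1) (η : H) :
    ‖A η‖ ^ 2 + ‖B η‖ ^ 2 = ‖η‖ ^ 2 := by
  have h := congrArg (fun T : H →L[ℂ] H => (inner ℂ (T η) η : ℂ)) hpyth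
  simp only [ContinuousLinearMap.add_apply, ContinuousLinearMap.comp_apply,
    ContinuousLinearMap.one_apply, inner_add_left] at h
  rw [ContinuousLinearMap.adjoint_inner_left, ContinuousLinearMap.adjoint_inner_left,
    inner_self_eq_norm_sq_to_K, inner_self_eq_norm_sq_to_K, inner_self_eq_norm_sq_to_K] at h
  exact_mod_cast h

/-- extend a finite word to an infinite one -/
def extW {n : ℕ} (f : Fin n → Bool) : ℕ → Bool :=
  fun k => if h : k < n then f ⟨k, h⟩ else false

lemma sum_words (hpyth : (ContinuousLinearMap.adjoint A).comp A
      + (ContinuousLinearMap.adjoint B).comp B = 1) (n : ℕ) (η : H) :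
    ∑ f : Fin n → Bool, ‖rayOp A B (extW f) n η‖ ^ 2 = ‖η‖ ^ 2 := by
  induction n with
  | zero => simp [rayOp_zero]
  | succ n ih =>
    rw [← Equiv.sum_comp (Fin.snocEquiv (fun _ => Bool))
      (fun f => ‖rayOp A B (extW f) (n+1) η‖ ^ 2), Fintype.sum_prod_type_right]

    have key : ∀ (g : Fin n → Bool) (b : Bool),
        rayOp A B (extW (Fin.snoc g b : Fin (n+1) → Bool)) (n+1) η
          = (if b then B else A) (rayOp A B (extW g) n η) := by
      intro g b
      rw [rayOp_succ]
      have h1 : extW (Fin.snoc g b : Fin (n+1) → Bool) n = b := by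
        simp only [extW, dif_pos (Nat.lt_succ_self n)]
        exact congrArg _ rfl |>.trans (by
          have : (⟨n, Nat.lt_succ_self n⟩ : Fin (n+1)) = Fin.last n := rfl
          rw [this, Fin.snoc_last])
      have h2 : rayOp A B (extW (Fin.snoc g b : Fin (n+1) → Bool)) n
          = rayOp A B (extW g) n := by
        refine rayOp_congr A B _ _ n fun k hk => ?_
        simp only [extW, dif_pos hk, dif_pos (Nat.lt_succ_of_lt hk)]
        have : (⟨k, Nat.lt_succ_of_lt hk⟩ : Fin (n+1)) = Fin.castSucc ⟨k, hk⟩ := rfl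
        rw [this, Fin.snoc_castSucc]
      rw [h1, h2, ContinuousLinearMap.mul_apply]
    calc ∑ g : Fin n → Bool, ∑ b : Bool,
          ‖rayOp A B (extW (Fin.snoc g b : Fin (n+1) → Bool)) (n+1) η‖ ^ 2
        = ∑ g : Fin n → Bool, ‖rayOp A B (extW g) n η‖ ^ 2 := by
          refine Finset.sum_congr rfl fun g _ => ?_
          rw [Fintype.sum_bool, key, key, if_pos rfl, if_neg (by simp), add_comm]
          exact pyth_norm A B hpyth _
      _ = ‖η‖ ^ 2 := ih

end Aux

theorem pythagorean_pair_partially_contained_finitely_many_rays_contradiction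
    {H : Type*} [NormedAddCommGroup H] [InnerProductSpace ℂ H] [CompleteSpace H]
    (A B : H →L[ℂ] H)
    (hpyth : (ContinuousLinearMap.adjoint A).comp A
      + (ContinuousLinearMap.adjoint B).comp B = 1)
    (m : ℕ) (hm : 1 ≤ m) (p : Fin m → ℕ → Bool)
    (hdist : ∀ i j : Fin m, i ≠ j → p i ≠ p j)
    (ξ : H) (hξ0 : ξ ≠ 0)
    (hpart : ∀ i : Fin m, ∃ c : ℝ, 0 < c ∧
      Tendsto (fun n => ‖rayOp A B (p i) n ξ‖) atTop (nhds c) ∧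
      ∀ n, ‖rayOp A B (p i) n ξ‖ ≠ c)
    (hkill : ∀ (w : ℕ → Bool) (n : ℕ),
      (¬ ∃ i : Fin m, ∀ k < n, w k = p i k) → rayOp A B w n ξ = 0)
    (horth : ∀ (w : ℕ → Bool) (n : ℕ), ∀ η ∈ vSpace A B,
      (inner ℂ (rayOp A B w n ξ) η : ℂ) = 0) :
    False := by
  classical
  -- a bound past which all the rays have pairwise distinct prefixes
  have hex : ∀ i j : Fin m, i ≠ j → ∃ k, p i k ≠ p j k := by
    intro i j hij
    by_contra h
    push_neg at h
    exact hdist i j hij (funext h)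
  set d : Fin m × Fin m → ℕ := fun ij =>
    if h : ij.1 ≠ ij.2 then Classical.choose (hex ij.1 ij.2 h) else 0 with hd
  set N : ℕ := (Finset.univ.sup d) + 1 with hN
  -- the key identity: ξ is quasi-contained in the rays p
  have hkey : ∀ n, N ≤ n → ‖ξ‖ ^ 2 = ∑ i, ‖rayOp A B (p i) n ξ‖ ^ 2 := by
    intro n hn
    -- restriction map
    set r : Fin m → (Fin n → Bool) := fun i k => p i k with hr
    have hrinj : Function.Injective r := by
      intro i j hij
      by_contra hne
      have hk := Classical.choose_spec (hex i j hne)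
      set k := Classical.choose (hex i j hne) with hkdef
      have hkn : k < n := by
        have : d (i, j) ≤ Finset.univ.sup d := Finset.le_sup (Finset.mem_univ _)
        have hdk : d (i, j) = k := by simp [hd, hne, hkdef]
        omega
      have := congrFun hij (⟨k, hkn⟩ : Fin n)
      exact hk this
    have hext : ∀ i : Fin m, rayOp A B (extW (r i)) n ξ = rayOp A B (p i) n ξ := by
      intro i
      refine congrFun (congrArg _ (rayOp_congr A B _ _ n fun k hk => ?_)) ξ
      simp [extW, dif_pos hk, hr]
    rw [← sum_words A B hpyth n ξ]
    rw [← Finset.sum_subset (Finset.subset_univ (Finset.univ.image r))]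
    · rw [Finset.sum_image (fun i _ j _ h => hrinj h)]
      exact Finset.sum_congr rfl fun i _ => by rw [hext]
    · intro f _ hf
      have : ¬ ∃ i : Fin m, ∀ k < n, extW f k = p i k := by
        rintro ⟨i, hi⟩
        refine hf (Finset.mem_image.2 ⟨i, Finset.mem_univ _, ?_⟩)
        funext k
        have := hi k k.isLt
        simpa [extW, hr] using this.symm
      rw [hkill _ n this]
      simp
  have hmem : ξ ∈ vSpace A B := ⟨m, N, p, hm, hkey⟩
  have h0 := horth (fun _ => false) 0 ξ hmem
  rw [rayOp_zero] at h0
  simp only [ContinuousLinearMap.one_apply, inner_self_eq_zero] at h0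
  exact hξ0 h0
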